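/- For 0 < β < 1/2 and k, λ > 0, define L(x) = (k/(1-2x)) D(B(x)‖B(β)) and R(x) = ln((λ + Λ(x))/λ) with Λ(x) = ln(x(1-x)/(β(1-β))). On the interval (β, 1/2), the equation L(x) = R(x) has exactly one solution, given that L is strictly convex increasing with L(β) = 0, and R is strictly concave increasing with R(β) = 0. -/

import Mathlib

/-- Kullback–Leibler divergence `D(B(x) ‖ B(β))` between Bernoulli distributions. -/
noncomputable def binKL (x β : ℝ) : ℝ :=
  x * Real.log (x / β) + (1 - x) * Real.log ((1 - x) / (1 - β))

/-- `Λ(x) = ln(x(1-x)/(β(1-β)))`. -/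
noncomputable def Lam (β x : ℝ) : ℝ := Real.log (x * (1 - x) / (β * (1 - β)))

open Real Set Filter Topology

private lemma log_comp {u : ℝ → ℝ} {u' x : ℝ} (hu : HasDerivAt u u' x) (hne : u x ≠ 0) :
    HasDerivAt (fun y => Real.log (u y)) ((u x)⁻¹ * u') x :=
  (Real.hasDerivAt_log hne).comp x hu

private lemma binKL_self (β : ℝ) (h0 : 0 < β) (h1 : β < 1) : binKL β β = 0 := by
  simp [binKL, div_self (ne_of_gt h0), div_self (by linarith : (1:ℝ) - β ≠ 0)]

private lemma binKL_hasDerivAt (β : ℝ) (h0 : 0 < β) (h1 : β < 1) :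
    HasDerivAt (fun x => binKL x β) 0 β := by
  have hβne : β ≠ 0 := ne_of_gt h0
  have h1βne : (1:ℝ) - β ≠ 0 := by linarith
  have hd1 : HasDerivAt (fun x : ℝ => Real.log (x / β)) ((β / β)⁻¹ * (1 / β)) β := by
    have : HasDerivAt (fun x : ℝ => x / β) (1 / β) β := by
      simpa using (hasDerivAt_id β).div_const β
    exact log_comp this (by simp [div_self hβne])
  have hd2 : HasDerivAt (fun x : ℝ => Real.log ((1 - x) / (1 - β)))
      (((1 - β) / (1 - β))⁻¹ * ((0 - 1) / (1 - β))) β := by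
    have : HasDerivAt (fun x : ℝ => (1 - x) / (1 - β)) ((0 - 1) / (1 - β)) β := by
      exact ((hasDerivAt_const β (1:ℝ)).sub (hasDerivAt_id β)).div_const (1 - β)
    exact log_comp this (by simp [div_self h1βne])
  have h1 : HasDerivAt (fun x : ℝ => x * Real.log (x / β))
      (1 * Real.log (β / β) + β * ((β / β)⁻¹ * (1 / β))) β :=
    (hasDerivAt_id β).mul hd1
  have h2 : HasDerivAt (fun x : ℝ => (1 - x) * Real.log ((1 - x) / (1 - β)))
      ((0 - 1) * Real.log ((1 - β) / (1 - β)) +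
        (1 - β) * (((1 - β) / (1 - β))⁻¹ * ((0 - 1) / (1 - β)))) β :=
    ((hasDerivAt_const β (1:ℝ)).sub (hasDerivAt_id β)).mul hd2
  have := h1.add h2
  have hfun : (fun x => binKL x β) = fun x : ℝ =>
      x * Real.log (x / β) + (1 - x) * Real.log ((1 - x) / (1 - β)) := by
    ext x; simp [binKL]
  rw [hfun]
  refine this.congr_deriv ?_
  rw [div_self hβne, div_self h1βne, Real.log_one]; field_simp; ring


private lemma L_hasDerivAt (β k : ℝ) (h0 : 0 < β) (hβ : β < 1 / 2) :
    HasDerivAt (fun x => k / (1 - 2 * x) * binKL x β) 0 β := by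
  have hne : (1 : ℝ) - 2 * β ≠ 0 := by nlinarith
  have hfac : HasDerivAt (fun x : ℝ => k / (1 - 2 * x))
      ((0 * (1 - 2 * β) - k * (0 - 2 * 1)) / (1 - 2 * β) ^ 2) β :=
    (hasDerivAt_const β k).div
      ((hasDerivAt_const β (1:ℝ)).sub ((hasDerivAt_id β).const_mul 2)) hne
  have := hfac.mul (binKL_hasDerivAt β h0 (by linarith))
  refine this.congr_deriv ?_
  rw [binKL_self β h0 (by linarith)]
  ring

private lemma R_hasDerivAt (β lam : ℝ) (h0 : 0 < β) (hβ : β < 1 / 2) (hlam : 0 < lam) :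
    HasDerivAt (fun x => Real.log ((lam + Lam β x) / lam))
      ((1 - 2 * β) / (β * (1 - β)) / lam) β := by
  have hb1 : (0:ℝ) < 1 - β := by linarith
  have hbb : β * (1 - β) ≠ 0 := by positivity
  have hu : HasDerivAt (fun x : ℝ => x * (1 - x) / (β * (1 - β)))
      ((1 * (1 - β) + β * (0 - 1)) / (β * (1 - β))) β :=
    ((hasDerivAt_id β).mul ((hasDerivAt_const β (1:ℝ)).sub (hasDerivAt_id β))).div_const _
  have huβ : β * (1 - β) / (β * (1 - β)) = 1 := div_self hbb
  have hΛ : HasDerivAt (fun x => Lam β x)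
      ((1:ℝ)⁻¹ * ((1 * (1 - β) + β * (0 - 1)) / (β * (1 - β)))) β := by
    have := log_comp hu (by rw [huβ]; norm_num)
    simpa [Lam, huβ] using this
  have hΛβ : Lam β β = 0 := by simp [Lam, huβ]
  have hv : HasDerivAt (fun x => (lam + Lam β x) / lam)
      ((0 + (1:ℝ)⁻¹ * ((1 * (1 - β) + β * (0 - 1)) / (β * (1 - β)))) / lam) β :=
    ((hasDerivAt_const β lam).add hΛ).div_const lam
  have hvβ : (lam + Lam β β) / lam = 1 := by rw [hΛβ, add_zero]; field_simp
  have := log_comp hv (by rw [hvβ]; norm_num)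
  rw [hvβ] at this
  convert this using 1
  field_simp
  ring

private lemma Lam_nonneg (β x : ℝ) (h0 : 0 < β) (hβx : β ≤ x) (hx : x ≤ 1 / 2)
    (hβ : β < 1 / 2) : 0 ≤ Lam β x := by
  apply Real.log_nonneg
  rw [le_div_iff₀ (by nlinarith)]
  nlinarith [mul_nonneg (sub_nonneg.2 hβx) (by nlinarith : (0:ℝ) ≤ 1 - x - β)]

private lemma Lam_le (β x : ℝ) (h0 : 0 < β) (hβx : β ≤ x) (hx : x ≤ 1 / 2)
    (hβ : β < 1 / 2) : Lam β x ≤ Lam β (1 / 2) := by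
  apply Real.log_le_log (by apply div_pos (by nlinarith) (by nlinarith))
  rw [div_le_div_iff_of_pos_right (by nlinarith : (0:ℝ) < β * (1 - β))]
  nlinarith

private lemma binKL_half_pos (β : ℝ) (h0 : 0 < β) (hβ : β < 1 / 2) :
    0 < binKL (1 / 2) β := by
  have h1 : (0:ℝ) < 1 - β := by linarith
  have : binKL (1 / 2) β = 1 / 2 * Real.log (1 / 4 / (β * (1 - β))) := by
    rw [binKL, show (1:ℝ) - 1/2 = 1/2 by norm_num,
      show (1:ℝ)/4/(β*(1-β)) = (1/2/β) * (1/2/(1-β)) by field_simp; ring,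
      Real.log_mul (by positivity) (by positivity)]
    ring
  rw [this]
  have : (1:ℝ) < 1 / 4 / (β * (1 - β)) := by
    rw [lt_div_iff₀ (by positivity)]; nlinarith
  nlinarith [Real.log_pos this]

private lemma binKL_contAt (β x : ℝ) (h0 : 0 < β) (hβ1 : β < 1) (hx0 : 0 < x)
    (hx1 : x < 1) : ContinuousAt (fun y => binKL y β) x := by
  have h1 : ContinuousAt (fun y : ℝ => Real.log (y / β)) x :=
    (Real.continuousAt_log (by positivity)).comp (continuousAt_id.div_const β)
  have h2 : ContinuousAt (fun y : ℝ => Real.log ((1 - y) / (1 - β))) x :=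
    (Real.continuousAt_log (by
      have : (0:ℝ) < (1 - x) / (1 - β) := by apply div_pos <;> linarith
      positivity)).comp (((continuousAt_const).sub continuousAt_id).div_const (1 - β))
  unfold binKL
  exact (continuousAt_id.mul h1).add ((continuousAt_const.sub continuousAt_id).mul h2)

private lemma R_contAt (β lam x : ℝ) (h0 : 0 < β) (hβ : β < 1 / 2) (hlam : 0 < lam)
    (hβx : β ≤ x) (hx : x ≤ 1 / 2) :
    ContinuousAt (fun y => Real.log ((lam + Lam β y) / lam)) x := by
  have hx0 : 0 < x := lt_of_lt_of_le h0 hβx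
  have hΛc : ContinuousAt (fun y => Lam β y) x := by
    unfold Lam
    exact (Real.continuousAt_log (by
      have : (0:ℝ) < x * (1 - x) / (β * (1 - β)) := by
        apply div_pos (by nlinarith) (by nlinarith)
      positivity)).comp
      ((continuousAt_id.mul (continuousAt_const.sub continuousAt_id)).div_const _)
  have hpos : (0:ℝ) < (lam + Lam β x) / lam :=
    div_pos (by linarith [Lam_nonneg β x h0 hβx hx hβ]) hlam
  exact ContinuousAt.comp (g := Real.log) (f := fun y => (lam + Lam β y) / lam)
    (Real.continuousAt_log (ne_of_gt hpos)) ((continuousAt_const.add hΛc).div_const lam)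

private lemma L_tendsto_atTop (β k : ℝ) (h0 : 0 < β) (hβ : β < 1 / 2) (hk : 0 < k) :
    Filter.Tendsto (fun x => k / (1 - 2 * x) * binKL x β)
      (nhdsWithin (1/2) (Set.Iio (1/2))) Filter.atTop := by
  have hbin : Filter.Tendsto (fun x => binKL x β) (nhdsWithin (1/2) (Set.Iio (1/2)))
      (nhds (binKL (1/2) β)) :=
    ((binKL_contAt β (1/2) h0 (by linarith) (by norm_num) (by norm_num)).tendsto).mono_left
      nhdsWithin_le_nhds
  have h1 : Filter.Tendsto (fun x : ℝ => 1 - 2 * x) (nhdsWithin (1/2) (Set.Iio (1/2)))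
      (nhdsWithin 0 (Set.Ioi 0)) := by
    apply tendsto_nhdsWithin_of_tendsto_nhds_of_eventually_within
    · have : Filter.Tendsto (fun x : ℝ => 1 - 2 * x) (nhds (1/2)) (nhds (1 - 2 * (1/2))) :=
        (continuousAt_const.sub (continuousAt_id.const_mul 2)).tendsto
      simpa using this.mono_left nhdsWithin_le_nhds
    · filter_upwards [self_mem_nhdsWithin] with x hx
      simp only [Set.mem_Iio] at hx
      simp only [Set.mem_Ioi]; linarith
  have h2 : Filter.Tendsto (fun x : ℝ => k * (1 - 2 * x)⁻¹)
      (nhdsWithin (1/2) (Set.Iio (1/2))) Filter.atTop :=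
    (h1.inv_tendsto_nhdsGT_zero).const_mul_atTop hk
  have := h2.atTop_mul_pos (binKL_half_pos β h0 hβ) hbin
  simpa [div_eq_mul_inv] using this

/-- For `0 < β < 1/2` and `k, λ > 0`, set `L(x) = (k/(1-2x)) D(B(x)‖B(β))` and
`R(x) = ln((λ + Λ(x))/λ)` with `Λ(x) = ln(x(1-x)/(β(1-β)))`. Given that `L` is a strictly
convex increasing function with `L(β) = 0` and `R` is a strictly concave increasing function
with `R(β) = 0`, the equation `L(x) = R(x)` has exactly one solution in `(β, 1/2)`. -/
theorem kkt_equation_unique_solution (β k lam : ℝ) (hβ0 : 0 < β) (hβ : β < 1 / 2)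
    (hk : 0 < k) (hlam : 0 < lam)
    (hLconv : StrictConvexOn ℝ (Set.Ico β (1 / 2))
      (fun x => k / (1 - 2 * x) * binKL x β))
    (hLmono : StrictMonoOn (fun x => k / (1 - 2 * x) * binKL x β) (Set.Ico β (1 / 2)))
    (hL0 : k / (1 - 2 * β) * binKL β β = 0)
    (hRconc : StrictConcaveOn ℝ (Set.Ico β (1 / 2))
      (fun x => Real.log ((lam + Lam β x) / lam)))
    (hRmono : StrictMonoOn (fun x => Real.log ((lam + Lam β x) / lam)) (Set.Ico β (1 / 2)))
    (hR0 : Real.log ((lam + Lam β β) / lam) = 0) :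
    ∃! x : ℝ, x ∈ Set.Ioo β (1 / 2) ∧
      k / (1 - 2 * x) * binKL x β = Real.log ((lam + Lam β x) / lam) := by
  set L : ℝ → ℝ := fun x => k / (1 - 2 * x) * binKL x β with hLdef
  set R : ℝ → ℝ := fun x => Real.log ((lam + Lam β x) / lam) with hRdef
  set g : ℝ → ℝ := fun x => L x - R x with hgdef
  have hLβ : L β = 0 := hL0
  have hRβ : R β = 0 := hR0
  have hgβ : g β = 0 := by simp [hgdef, hLβ, hRβ]
  -- derivative of g at β is negative
  have hgd : HasDerivAt g (0 - (1 - 2 * β) / (β * (1 - β)) / lam) β :=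
    (L_hasDerivAt β k hβ0 hβ).sub (R_hasDerivAt β lam hβ0 hβ hlam)
  have hcneg : 0 - (1 - 2 * β) / (β * (1 - β)) / lam < 0 := by
    have : 0 < (1 - 2 * β) / (β * (1 - β)) / lam := by
      apply div_pos (div_pos (by linarith) (by nlinarith)) hlam
    linarith
  -- find x₁ > β with g x₁ < 0
  have hslope : Filter.Tendsto (slope g β) (nhdsWithin β {β}ᶜ)
      (nhds (0 - (1 - 2 * β) / (β * (1 - β)) / lam)) :=
    hasDerivAt_iff_tendsto_slope.1 hgd
  have hle : nhdsWithin β (Set.Ioi β) ≤ nhdsWithin β {β}ᶜ :=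
    nhdsWithin_mono β (fun x hx => ne_of_gt hx)
  have hev1 : ∀ᶠ x in nhdsWithin β (Set.Ioi β), slope g β x < 0 :=
    (hslope.mono_left hle).eventually_lt_const hcneg
  have hmem1 : Set.Ioo β (1 / 2) ∈ nhdsWithin β (Set.Ioi β) :=
    Ioo_mem_nhdsGT_of_mem ⟨le_refl β, hβ⟩
  obtain ⟨x₁, hs1, hx1⟩ := (hev1.and (Filter.eventually_of_mem hmem1 (fun _ h => h))).exists
  have hgx1 : g x₁ < 0 := by
    rw [slope_def_field, hgβ, sub_zero] at hs1
    have hd : 0 < x₁ - β := sub_pos.2 hx1.1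
    rcases div_neg_iff.1 hs1 with ⟨h1, h2⟩ | ⟨h1, h2⟩
    · linarith
    · exact h1
  -- upper bound for R
  have hRle : ∀ x, β ≤ x → x ≤ 1 / 2 → R x ≤ Real.log ((lam + Lam β (1 / 2)) / lam) := by
    intro x h1 h2
    apply Real.log_le_log
      (div_pos (by linarith [Lam_nonneg β x hβ0 h1 h2 hβ]) hlam)
    apply div_le_div_of_nonneg_right ?_ ?_
    · linarith [Lam_le β x hβ0 h1 h2 hβ]
    · exact le_of_lt hlam
  -- find x₂ with g x₂ > 0
  have hT := L_tendsto_atTop β k hβ0 hβ hk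
  have hev2 : ∀ᶠ x in nhdsWithin (1/2 : ℝ) (Set.Iio (1/2)),
      Real.log ((lam + Lam β (1 / 2)) / lam) < L x :=
    hT.eventually_gt_atTop _
  have hmem2 : Set.Ioo x₁ (1/2 : ℝ) ∈ nhdsWithin (1/2 : ℝ) (Set.Iio (1/2)) :=
    Ioo_mem_nhdsLT_of_mem ⟨hx1.2, le_refl _⟩
  obtain ⟨x₂, hgt2, hx2⟩ := (hev2.and (Filter.eventually_of_mem hmem2 (fun _ h => h))).exists
  have hx2β : β < x₂ := lt_trans hx1.1 hx2.1
  have hgx2 : 0 < g x₂ := by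
    have := hRle x₂ (le_of_lt hx2β) (le_of_lt hx2.2)
    simp only [hgdef]
    linarith
  -- continuity of g on [x₁, x₂]
  have hcont : ContinuousOn g (Set.Icc x₁ x₂) := by
    intro x hx
    have h1 : β < x := lt_of_lt_of_le hx1.1 hx.1
    have h2 : x < 1 / 2 := lt_of_le_of_lt hx.2 hx2.2
    have hLc : ContinuousAt L x := by
      apply ContinuousAt.mul
      · exact continuousAt_const.div (continuousAt_const.sub (continuousAt_id.const_mul 2))
          (by nlinarith : (1:ℝ) - 2 * x ≠ 0)
      · exact binKL_contAt β x hβ0 (by linarith) (by linarith) (by linarith)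
    have hRc : ContinuousAt R x := R_contAt β lam x hβ0 hβ hlam (le_of_lt h1) (le_of_lt h2)
    exact (hLc.sub hRc).continuousWithinAt
  -- IVT
  obtain ⟨x, hxmem, hgx⟩ := intermediate_value_Ioo (le_of_lt hx2.1) hcont ⟨hgx1, hgx2⟩
  have hxIoo : x ∈ Set.Ioo β (1 / 2) :=
    ⟨lt_trans hx1.1 hxmem.1, lt_trans hxmem.2 hx2.2⟩
  -- strict convexity gives uniqueness
  have key : ∀ a b : ℝ, a ∈ Set.Ioo β (1 / 2) → b ∈ Set.Ioo β (1 / 2) → a < b →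
      g a = 0 → g b = 0 → False := by
    intro a b ha hb hab hga hgb
    have hconv : StrictConvexOn ℝ (Set.Ico β (1 / 2)) (L - R) := hLconv.sub hRconc
    have hbβ : (0:ℝ) < b - β := sub_pos.2 hb.1
    set t := (b - a) / (b - β) with htdef
    have ht0 : 0 < t := div_pos (sub_pos.2 hab) hbβ
    have ht1 : 0 < 1 - t := by
      have : t < 1 := (div_lt_one hbβ).2 (by linarith [ha.1])
      linarith
    have hcomb : t • β + (1 - t) • b = a := by
      simp only [smul_eq_mul, htdef]
      field_simp
      ring
    have hlt := hconv.2 (show β ∈ Set.Ico β (1 / 2) from ⟨le_refl _, hβ⟩)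
      (show b ∈ Set.Ico β (1 / 2) from ⟨le_of_lt hb.1, hb.2⟩)
      (ne_of_lt hb.1) ht0 ht1 (by ring)
    rw [hcomb] at hlt
    simp only [Pi.sub_apply, smul_eq_mul] at hlt
    have e1 : L a - R a = 0 := hga
    have e2 : L β - R β = 0 := by rw [hLβ, hRβ]; ring
    have e3 : L b - R b = 0 := hgb
    rw [e1, e2, e3] at hlt
    simp at hlt
  refine ⟨x, ⟨hxIoo, sub_eq_zero.1 hgx⟩, ?_⟩
  intro y ⟨hymem, hyeq⟩
  have hgy : g y = 0 := sub_eq_zero.2 hyeq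
  by_contra hne
  rcases lt_or_gt_of_ne hne with h | h
  · exact key y x hymem hxIoo h hgy hgx
  · exact key x y hxIoo hymem h hgx hgy
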